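/- The combs Γ_{1a} and the words 1b are dual bases: (Γ_{1a}, 1b) = (a, b), i.e., the pairing is 1 if a = b as permutations of x_2,...,x_{n-1} and 0 otherwise. -/

import Mathlib

open scoped BigOperators

/-- `Wd m` : the algebra of formal ℚ-linear combinations of words in letters `x_1,…,x_m`
(represented as `Fin m`), with concatenation product. -/
abbrev Wd (m : ℕ) := MonoidAlgebra ℚ (FreeMonoid (Fin m))

/-- The word monomial associated to a list of letters. -/
noncomputable def word {m : ℕ} (l : List (Fin m)) : Wd m :=
  MonoidAlgebra.single (FreeMonoid.ofList l) 1

/-- All interleavings (shuffles) of two lists. -/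
def shuffles {α : Type*} : List α → List α → List (List α)
  | [], bs => [bs]
  | a :: as, [] => [a :: as]
  | a :: as, b :: bs =>
      (shuffles as (b :: bs)).map (a :: ·) ++ (shuffles (a :: as) bs).map (b :: ·)

/-- The shuffle product of two words, as an element of `Wd m`. -/
noncomputable def shuffleProd {m : ℕ} (a b : List (Fin m)) : Wd m :=
  ((shuffles a b).map word).sum

/-- Binary trees representing iterated commutators (Lie monomials). -/
inductive LieTree (m : ℕ) where
  | leaf : Fin m → LieTree m
  | node : LieTree m → LieTree m → LieTree m

/-- Expansion of a Lie monomial in the word algebra, via `[u,v] = uv - vu`. -/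
noncomputable def LieTree.expand {m : ℕ} : LieTree m → Wd m
  | .leaf i => word [i]
  | .node u v => u.expand * v.expand - v.expand * u.expand

/-- The list of leaf labels of a Lie tree, read left to right. -/
def LieTree.leaves {m : ℕ} : LieTree m → List (Fin m)
  | .leaf i => [i]
  | .node u v => u.leaves ++ v.leaves

/-- `Lie(m)` : the span of the multilinear Lie monomials (each letter used exactly once). -/
noncomputable def LieSub (m : ℕ) : Submodule ℚ (Wd m) :=
  Submodule.span ℚ
    {x | ∃ T : LieTree m, T.leaves.Perm (List.finRange m) ∧ x = LieTree.expand T}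

/-- `W(m)` : the span of the multilinear words (each letter used exactly once). -/
noncomputable def Wsub (m : ℕ) : Submodule ℚ (Wd m) :=
  Submodule.span ℚ {x | ∃ l : List (Fin m), l.Perm (List.finRange m) ∧ x = word l}

/-- `Sh(m)` : the span of nontrivial shuffles of multilinear words. -/
noncomputable def ShSub (m : ℕ) : Submodule ℚ (Wd m) :=
  Submodule.span ℚ
    {x | ∃ a b : List (Fin m), a ≠ [] ∧ b ≠ [] ∧ (a ++ b).Perm (List.finRange m) ∧
      x = shuffleProd a b}

/-- The left-nested comb `Γ_{1a} = [...[[x_1, a_1], a_2], …]` (the letter `x_1` is `0`). -/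
def comb {m : ℕ} [NeZero m] (a : List (Fin m)) : LieTree m :=
  a.foldl (fun t i => LieTree.node t (LieTree.leaf i)) (LieTree.leaf 0)

/-- The finset of permutations of the letters `x_2,…,x_m` (i.e. of `(finRange m).tail`). -/
noncomputable def permsTail (m : ℕ) : Finset (List (Fin m)) :=
  ((List.finRange m).tail).permutations.toFinset


lemma zero_not_mem_tail_finRange (m : ℕ) [NeZero m] :
    (0 : Fin m) ∉ (List.finRange m).tail := by
  cases m with
  | zero => exact absurd rfl (NeZero.ne 0)
  | succ k =>
      rw [List.finRange_succ]
      simp only [List.tail_cons, List.mem_map]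
      rintro ⟨i, -, hi⟩
      exact Fin.succ_ne_zero i hi

lemma comb_append_single {m : ℕ} [NeZero m] (a : List (Fin m)) (x : Fin m) :
    comb (a ++ [x]) = LieTree.node (comb a) (LieTree.leaf x) := by
  simp [comb, List.foldl_append]

lemma comb_expand_apply {m : ℕ} [NeZero m] (a : List (Fin m)) (h0 : (0 : Fin m) ∉ a)
    (c : List (Fin m)) :
    (comb a).expand.coeff (FreeMonoid.ofList ((0 : Fin m) :: c)) = if c = a then 1 else 0 := by
  induction a using List.reverseRecOn generalizing c with
  | nil =>
      classical
      simp only [comb, List.foldl_nil, LieTree.expand, word]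
      rw [MonoidAlgebra.single_apply]
      have : FreeMonoid.ofList [(0 : Fin m)] = FreeMonoid.ofList (0 :: c) ↔ c = [] := by
        constructor
        · intro h
          have := FreeMonoid.ofList.injective h
          simpa using this.symm
        · rintro rfl; rfl
      simp only [this]
  | append_singleton a' x ih =>
      have hx : x ≠ 0 := by
        intro h; subst h; exact h0 (by simp)
      have h0' : (0 : Fin m) ∉ a' := fun h => h0 (by simp [h])
      rw [comb_append_single]
      simp only [LieTree.expand]
      rw [MonoidAlgebra.coeff_sub, Finsupp.sub_apply]
      have hterm2 : ((word [x] : Wd m) * (comb a').expand).coeff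
          (FreeMonoid.ofList ((0 : Fin m) :: c)) = 0 := by
        simp only [word]
        apply MonoidAlgebra.single_mul_apply_of_not_exists_mul
        rintro ⟨d, hd⟩
        have : ((0 : Fin m) :: c) = x :: FreeMonoid.toList d := congrArg FreeMonoid.toList hd
        exact hx (List.head_eq_of_cons_eq this).symm
      rw [hterm2, sub_zero]
      have hcc := List.eq_nil_or_concat c
      simp only [List.concat_eq_append] at hcc
      rcases hcc with rfl | ⟨c', y, rfl⟩
      · have : ((comb a').expand * (word [x] : Wd m)).coeff
            (FreeMonoid.ofList [(0 : Fin m)]) = 0 := by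
          simp only [word]
          apply MonoidAlgebra.mul_single_apply_of_not_exists_mul
          rintro ⟨d, hd⟩
          have : [(0 : Fin m)] = FreeMonoid.toList d ++ [x] := congrArg FreeMonoid.toList hd
          rcases List.eq_nil_or_concat (FreeMonoid.toList d) with hnil | ⟨d', z, hdz⟩
          · rw [hnil] at this; simp at this; exact hx this.symm
          · rw [hdz] at this
            have := congrArg List.length this
            simp at this
        rw [this]
        have : ([] : List (Fin m)) ≠ a' ++ [x] := by simp
        simp [this]
      · by_cases hyx : y = x
        · subst hyx
          have key : ((comb a').expand * (word [y] : Wd m)).coeff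
              (FreeMonoid.ofList ((0 : Fin m) :: (c' ++ [y]))) =
              ((comb a').expand).coeff (FreeMonoid.ofList ((0 : Fin m) :: c')) * 1 := by
            simp only [word]
            apply MonoidAlgebra.mul_single_apply_aux
            intro d _
            constructor
            · intro hd
              have h1 : FreeMonoid.toList d ++ [y] = ((0 : Fin m) :: c') ++ [y] := by
                have := congrArg FreeMonoid.toList hd
                simpa using this
              have h2 : FreeMonoid.toList d = (0 : Fin m) :: c' :=
                List.append_cancel_right h1
              calc d = FreeMonoid.ofList (FreeMonoid.toList d) := rfl
                _ = _ := by rw [h2]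
            · rintro rfl
              show FreeMonoid.ofList (((0:Fin m) :: c') ++ [y]) = _
              rfl
          rw [key, mul_one, ih h0']
          by_cases hc : c' = a'
          · subst hc; simp
          · have : c' ++ [y] ≠ a' ++ [y] := fun h => hc (List.append_cancel_right h)
            simp [hc, this]
        · have key : ((comb a').expand * (word [x] : Wd m)).coeff
              (FreeMonoid.ofList ((0 : Fin m) :: (c' ++ [y]))) = 0 := by
            simp only [word]
            apply MonoidAlgebra.mul_single_apply_of_not_exists_mul
            rintro ⟨d, hd⟩
            have h1 : ((0 : Fin m) :: c') ++ [y] = FreeMonoid.toList d ++ [x] := by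
              have := congrArg FreeMonoid.toList hd
              simpa using this
            have h2 := congrArg List.getLast? h1
            rw [List.getLast?_concat, List.getLast?_concat] at h2
            exact hyx (Option.some.inj h2)
          rw [key]
          have : c' ++ [y] ≠ a' ++ [x] := by
            intro h
            have := congrArg (List.getLast? ·) h
            simp at this
            exact hyx this
          simp [this]

/-- the combs `Γ_{1a}` and the words `1b` are dual bases:
`(Γ_{1a}, 1b) = (a, b)` for permutations `a`, `b` of the letters `x_2,…,x_{n-1}`. -/
theorem stmt4 (n : ℕ) [NeZero (n - 1)] (a b : List (Fin (n - 1)))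
    (ha : a.Perm ((List.finRange (n - 1)).tail))
    (hb : b.Perm ((List.finRange (n - 1)).tail)) :
    (comb a).expand.coeff (FreeMonoid.ofList ((0 : Fin (n - 1)) :: b)) =
      if a = b then 1 else 0 := by
  have h0a : (0 : Fin (n - 1)) ∉ a := fun h =>
    zero_not_mem_tail_finRange (n - 1) (ha.mem_iff.mp h)
  rw [comb_expand_apply a h0a b]
  by_cases h : a = b
  · subst h; simp
  · rw [if_neg (fun hh => h hh.symm), if_neg h]
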